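/- Under the diagonal approximation with energy-preserving scalings E_τ[rⱼ(τ)²] = 1 for all j, the teleported entropy lower bound dominates the baseline: H^lb_tele = H^lb₀ + (1/2) Σᵢ πᵢ Σⱼ Δψ_{i,j} with each Δψ_{i,j} = log(1+α_{i,j}) − E_τ[log(1 + α_{i,j} rⱼ(τ)²)] ≥ 0, hence H^lb_tele ≥ H^lb₀. -/

import Mathlib

open MeasureTheory

lemma jensen_log {T : Type*} [MeasurableSpace T] (ν : Measure T)
    [IsProbabilityMeasure ν] {a : ℝ} (ha : 0 ≤ a) (q : T → ℝ)
    (hqpos : ∀ᵐ t ∂ν, 0 < q t) (hqint : Integrable q ν)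
    (hqmean : ∫ t, q t ∂ν = 1)
    (hlogint : Integrable (fun t => Real.log (1 + a * q t)) ν) :
    ∫ t, Real.log (1 + a * q t) ∂ν ≤ Real.log (1 + a) := by
  have hconc : ConcaveOn ℝ (Set.Ici (1:ℝ)) Real.log :=
    (strictConcaveOn_log_Ioi.concaveOn).subset (fun x hx => by
      exact lt_of_lt_of_le one_pos (Set.mem_Ici.mp hx)) (convex_Ici 1)
  have hcont : ContinuousOn Real.log (Set.Ici 1) :=
    Real.continuousOn_log.mono (fun x hx hx0 => by simp_all; linarith)
  have hfs : ∀ᵐ t ∂ν, (1 + a * q t) ∈ Set.Ici (1:ℝ) := by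
    filter_upwards [hqpos] with t ht
    have := mul_nonneg ha ht.le
    simp [Set.mem_Ici]; linarith
  have hfi : Integrable (fun t => 1 + a * q t) ν :=
    (integrable_const 1).add (hqint.const_mul a)
  have := hconc.le_map_integral hcont isClosed_Ici hfs hfi hlogint
  simpa [integral_add (integrable_const (1:ℝ)) (hqint.const_mul a),
    integral_const_mul, hqmean] using this

/-- Under the diagonal approximation with energy-preserving
scalings `E_τ[rⱼ(τ)²] = 1` for all `j`, the teleported entropy lower bound
dominates the baseline:
`H^lb_tele = H^lb₀ + (1/2) Σᵢ πᵢ Σⱼ Δψ_{i,j}` with each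
`Δψ_{i,j} = log(1+α_{i,j}) − E_τ[log(1 + α_{i,j} rⱼ(τ)²)] ≥ 0`, and hence
`H^lb_tele ≥ H^lb₀`. -/
theorem stmt15 {T : Type*} [MeasurableSpace T] (ν : Measure T)
    [IsProbabilityMeasure ν] {K m : ℕ}
    (π' : Fin K → ℝ) (hπpos : ∀ i, 0 < π' i) (hπsum : ∑ i, π' i = 1)
    (α : Fin K → Fin m → ℝ) (hα : ∀ i j, 0 ≤ α i j)
    -- `q j t` is the squared scaling `rⱼ(τ)²`, positive with mean `1`:
    (q : Fin m → T → ℝ)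
    (hqpos : ∀ j, ∀ᵐ t ∂ν, 0 < q j t)
    (hqint : ∀ j, Integrable (q j) ν)
    (hqmean : ∀ j, ∫ t, q j t ∂ν = 1)
    (hlogint : ∀ i j, Integrable (fun t => Real.log (1 + α i j * q j t)) ν)
    -- the per-coordinate gaps `Δψ_{i,j}`:
    (Δψ : Fin K → Fin m → ℝ)
    (hΔψ : ∀ i j, Δψ i j =
      Real.log (1 + α i j) - ∫ t, Real.log (1 + α i j * q j t) ∂ν)
    -- the baseline and teleported entropy lower bounds:
    (Hx Hlb0 Hlbtele : ℝ)
    (hHlb0 : Hlb0 = Hx - ∑ i, π' i * (-Real.log (π' i) +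
      (1 / 2) * ∑ j, Real.log (1 + α i j)))
    (hHlbtele : Hlbtele = Hx - ∑ i, π' i * (-Real.log (π' i) +
      (1 / 2) * ∑ j, ∫ t, Real.log (1 + α i j * q j t) ∂ν)) :
    Hlbtele = Hlb0 + (1 / 2) * ∑ i, π' i * ∑ j, Δψ i j ∧
      (∀ i j, 0 ≤ Δψ i j) ∧ Hlb0 ≤ Hlbtele := by
  have hΔnn : ∀ i j, 0 ≤ Δψ i j := by
    intro i j
    rw [hΔψ i j, sub_nonneg]
    exact jensen_log ν (hα i j) (q j) (hqpos j) (hqint j) (hqmean j) (hlogint i j)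
  have heq : Hlbtele = Hlb0 + (1 / 2) * ∑ i, π' i * ∑ j, Δψ i j := by
    have hd : ∀ i, ∑ j, Δψ i j =
        (∑ j, Real.log (1 + α i j)) -
          ∑ j, ∫ t, Real.log (1 + α i j * q j t) ∂ν := by
      intro i
      rw [← Finset.sum_sub_distrib]
      exact Finset.sum_congr rfl fun j _ => hΔψ i j
    have key : ∑ i, π' i * ∑ j, Δψ i j
        = (∑ i, π' i * ∑ j, Real.log (1 + α i j))
          - ∑ i, π' i * ∑ j, ∫ t, Real.log (1 + α i j * q j t) ∂ν := by
      rw [← Finset.sum_sub_distrib]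
      exact Finset.sum_congr rfl fun i _ => by rw [hd i, mul_sub]
    have eA : ∑ i, π' i * (-Real.log (π' i) + (1/2) * ∑ j, Real.log (1 + α i j))
        = (∑ i, π' i * (-Real.log (π' i)))
          + (1/2) * ∑ i, π' i * ∑ j, Real.log (1 + α i j) := by
      rw [Finset.mul_sum, ← Finset.sum_add_distrib]
      exact Finset.sum_congr rfl fun i _ => by ring
    have eB : ∑ i, π' i * (-Real.log (π' i)
          + (1/2) * ∑ j, ∫ t, Real.log (1 + α i j * q j t) ∂ν)
        = (∑ i, π' i * (-Real.log (π' i)))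
          + (1/2) * ∑ i, π' i * ∑ j, ∫ t, Real.log (1 + α i j * q j t) ∂ν := by
      rw [Finset.mul_sum, ← Finset.sum_add_distrib]
      exact Finset.sum_congr rfl fun i _ => by ring
    rw [hHlb0, hHlbtele, key, eA, eB]
    ring
  refine ⟨heq, hΔnn, ?_⟩
  rw [heq]
  have : 0 ≤ ∑ i, π' i * ∑ j, Δψ i j :=
    Finset.sum_nonneg fun i _ => mul_nonneg (hπpos i).le
      (Finset.sum_nonneg fun j _ => hΔnn i j)
  linarith
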